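/- As formal power series in q^{1/2} (equivalently, after substituting q → t², as formal power series in t), the following Jacobi-type triple product identity holds: ∏_{i=1}^∞ (1 - q^{2i})(1 + z q^{2i - 1/2})(1 + z^{-1} q^{2i - 3/2}) = ∑_{m ∈ ℤ} z^m q^{m(2m+1)/2}, where z is a formal Laurent variable. -/

import Mathlib

open PowerSeries LaurentPolynomial

namespace JTP

noncomputable section

abbrev R : Type := LaurentPolynomial ℤ

abbrev XP : PowerSeries R := PowerSeries.X

def G (a b : ℕ) : PowerSeries R := ∏ i ∈ Finset.Ioc a b, (1 - XP ^ (4 * i))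

def d (n : ℕ) (m : ℤ) : PowerSeries R :=
  if m.natAbs ≤ n then
    XP ^ (m * (2 * m + 1)).toNat * (G (n + m.natAbs) (2 * n) * G (n - m.natAbs) n)
  else 0

lemma G_empty {a b : ℕ} (h : b ≤ a) : G a b = 1 := by
  rw [G, Finset.Ioc_eq_empty (by omega), Finset.prod_empty]

lemma G_mul {a b c : ℕ} (h1 : a ≤ b) (h2 : b ≤ c) : G a c = G a b * G b c := by
  rw [G, G, G, ← Finset.prod_union]
  · rw [Finset.Ioc_union_Ioc_eq_Ioc h1 h2]
  · rw [Finset.disjoint_left]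
    intro x hx hx'
    simp only [Finset.mem_Ioc] at hx hx'
    omega

lemma G_single (a : ℕ) : G a (a + 1) = 1 - XP ^ (4 * (a + 1)) := by
  rw [G, Nat.Ioc_succ_singleton, Finset.prod_singleton]

lemma d_out {n : ℕ} {m : ℤ} (h : n < m.natAbs) : d n m = 0 := by
  rw [d, if_neg (by omega)]

lemma natAbs_posE (k : ℕ) : ((k : ℤ)).natAbs = k := Int.natAbs_natCast k

lemma natAbs_negE (k : ℕ) : (-((k : ℤ) + 1)).natAbs = k + 1 := by
  rw [show -((k : ℤ) + 1) = Int.negSucc k by simp [Int.negSucc_eq], Int.natAbs_negSucc]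

lemma toNat_pos_exp (k : ℕ) : (((k : ℕ) : ℤ) * (2 * ((k : ℕ) : ℤ) + 1)).toNat = k * (2 * k + 1) := by
  rw [show ((k : ℤ) * (2 * (k : ℤ) + 1)) = ((k * (2 * k + 1) : ℕ) : ℤ) by push_cast; try ring,
    Int.toNat_natCast]

lemma toNat_neg_exp (k : ℕ) :
    ((-((k : ℤ) + 1)) * (2 * (-((k : ℤ) + 1)) + 1)).toNat = (k + 1) * (2 * k + 1) := by
  rw [show ((-((k : ℤ) + 1)) * (2 * (-((k : ℤ) + 1)) + 1)) = (((k + 1) * (2 * k + 1) : ℕ) : ℤ) by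
    push_cast; ring, Int.toNat_natCast]

lemma d_pos (n k : ℕ) (h : k ≤ n) :
    d n ((k : ℕ) : ℤ) = XP ^ (k * (2 * k + 1)) * (G (n + k) (2 * n) * G (n - k) n) := by
  rw [d, if_pos (by rw [natAbs_posE]; omega), natAbs_posE, toNat_pos_exp]

lemma d_neg (n k : ℕ) (h : k + 1 ≤ n) :
    d n (-((k : ℤ) + 1)) =
      XP ^ ((k + 1) * (2 * k + 1)) * (G (n + (k + 1)) (2 * n) * G (n - (k + 1)) n) := by
  rw [d, if_pos (by rw [natAbs_negE]; omega), natAbs_negE, toNat_neg_exp]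

lemma d_posE (n k a a' b b' e : ℕ) (h : k ≤ n) (ha : a = n + k) (ha' : a' = 2 * n)
    (hb : b = n - k) (hb' : b' = n) (he : e = k * (2 * k + 1)) :
    d n ((k : ℕ) : ℤ) = XP ^ e * (G a a' * G b b') := by
  subst ha ha' hb he; rw [d_pos _ _ h, hb']

lemma d_negE (n k a a' b b' e : ℕ) (h : k + 1 ≤ n) (ha : a = n + (k + 1)) (ha' : a' = 2 * n)
    (hb : b = n - (k + 1)) (hb' : b' = n) (he : e = (k + 1) * (2 * k + 1)) :
    d n (-((k : ℤ) + 1)) = XP ^ e * (G a a' * G b b') := by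
  subst ha ha' hb he; rw [d_neg _ _ h, hb']

lemma G_oneE (a b : ℕ) (h : b ≤ a) : G a b = 1 := G_empty h

lemma G_singleE (a b : ℕ) (hb : b = a + 1) : G a b = 1 - XP ^ (4 * b) := by
  subst hb; exact G_single a

lemma G_leftE (a a' b : ℕ) (h : a < b) (ha' : a' = a + 1) :
    G a b = (1 - XP ^ (4 * a')) * G a' b := by
  subst ha'; rw [G_mul (Nat.le_succ a) h, G_single]

lemma G_rightE (a b b' : ℕ) (h : a ≤ b) (hb' : b' = b + 1) :
    G a b' = G a b * (1 - XP ^ (4 * b')) := by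
  subst hb'; rw [G_mul h (Nat.le_succ b), G_single]

theorem key (n : ℕ) (m : ℤ) :
    d (n + 1) m = (1 - XP ^ (4 * n + 4)) *
      ((1 + XP ^ (8 * n + 4)) * d n m + XP ^ (4 * n + 3) * d n (m - 1)
        + XP ^ (4 * n + 1) * d n (m + 1)) := by
  rcases le_or_gt 0 m with hm | hm
  · obtain ⟨k, rfl⟩ := Int.eq_ofNat_of_zero_le hm
    rcases Nat.eq_zero_or_pos k with rfl | hk
    · -- k = 0
      rw [show ((0 : ℕ) : ℤ) + 1 = ((1 : ℕ) : ℤ) by push_cast; try ring,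
        show ((0 : ℕ) : ℤ) - 1 = -(((0 : ℕ) : ℤ) + 1) by push_cast; try ring]
      rcases Nat.eq_zero_or_pos n with rfl | hn
      · -- P1 : k = 0, n = 0
        rw [d_posE 1 0 1 2 1 1 0 (by omega) (by omega) (by omega) (by omega) (by omega) (by omega),
          d_posE 0 0 0 0 0 0 0 (by omega) (by omega) (by omega) (by omega) (by omega) (by omega),
          d_out (show (0:ℕ) < ((1:ℕ):ℤ).natAbs by rw [natAbs_posE]; omega),
          d_out (show (0:ℕ) < (-(((0:ℕ):ℤ) + 1)).natAbs by rw [natAbs_negE]; omega),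
          G_oneE 0 0 (by omega), G_oneE 1 1 (by omega),
          G_singleE 1 2 (by omega)]
        ring
      · -- P2 : k = 0, n = j + 1
        obtain ⟨j, rfl⟩ : ∃ j, n = j + 1 := ⟨n - 1, by omega⟩
        rw [d_posE (j+1+1) 0 (j+2) (2*j+4) (j+2) (j+2) 0 (by omega) (by omega) (by omega)
            (by omega) (by omega) (by omega),
          d_posE (j+1) 0 (j+1) (2*j+2) (j+1) (j+1) 0 (by omega) (by omega) (by omega)
            (by omega) (by omega) (by omega),
          d_negE (j+1) 0 (j+2) (2*j+2) j (j+1) 1 (by omega) (by omega) (by omega)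
            (by omega) (by omega) (by omega),
          d_posE (j+1) 1 (j+2) (2*j+2) j (j+1) 3 (by omega) (by omega) (by omega)
            (by omega) (by omega) (by omega),
          G_oneE (j+2) (j+2) (by omega), G_oneE (j+1) (j+1) (by omega),
          G_rightE (j+2) (2*j+3) (2*j+4) (by omega) (by omega),
          G_rightE (j+2) (2*j+2) (2*j+3) (by omega) (by omega),
          G_leftE (j+1) (j+2) (2*j+2) (by omega) (by omega),
          G_singleE j (j+1) (by omega)]
        ring
    · -- k = j + 1
      obtain ⟨j, rfl⟩ : ∃ j, k = j + 1 := ⟨k - 1, by omega⟩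
      rw [show (((j+1 : ℕ)) : ℤ) - 1 = ((j : ℕ) : ℤ) by push_cast; try ring,
        show (((j+1 : ℕ)) : ℤ) + 1 = ((j+2 : ℕ) : ℤ) by push_cast; try ring]
      rcases lt_trichotomy (j + 1) n with h | h | h
      · -- P3 : 1 ≤ k ≤ n - 1 ; n = j + c + 2
        obtain ⟨c, rfl⟩ : ∃ c, n = j + c + 2 := ⟨n - j - 2, by omega⟩
        rw [d_posE (j+c+2+1) (j+1) (2*j+c+4) (2*j+2*c+6) (c+2) (j+c+3) ((j+1)*(2*j+3))
            (by omega) (by omega) (by omega) (by omega) (by omega) (by ring),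
          d_posE (j+c+2) (j+1) (2*j+c+3) (2*j+2*c+4) (c+1) (j+c+2) ((j+1)*(2*j+3))
            (by omega) (by omega) (by omega) (by omega) (by omega) (by ring),
          d_posE (j+c+2) j (2*j+c+2) (2*j+2*c+4) (c+2) (j+c+2) (j*(2*j+1))
            (by omega) (by omega) (by omega) (by omega) (by omega) (by ring),
          d_posE (j+c+2) (j+2) (2*j+c+4) (2*j+2*c+4) c (j+c+2) ((j+2)*(2*j+5))
            (by omega) (by omega) (by omega) (by omega) (by omega) (by ring),
          G_rightE (2*j+c+4) (2*j+2*c+5) (2*j+2*c+6) (by omega) (by omega),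
          G_rightE (2*j+c+4) (2*j+2*c+4) (2*j+2*c+5) (by omega) (by omega),
          G_rightE (c+2) (j+c+2) (j+c+3) (by omega) (by omega),
          G_leftE (2*j+c+2) (2*j+c+3) (2*j+2*c+4) (by omega) (by omega),
          G_leftE (2*j+c+3) (2*j+c+4) (2*j+2*c+4) (by omega) (by omega),
          G_leftE c (c+1) (j+c+2) (by omega) (by omega),
          G_leftE (c+1) (c+2) (j+c+2) (by omega) (by omega)]
        ring
      · -- P4 : k = n = j + 1
        subst h
        rw [d_posE (j+1+1) (j+1) (2*j+3) (2*j+4) 1 (j+2) ((j+1)*(2*j+3))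
            (by omega) (by omega) (by omega) (by omega) (by omega) (by ring),
          d_posE (j+1) (j+1) (2*j+2) (2*j+2) 0 (j+1) ((j+1)*(2*j+3))
            (by omega) (by omega) (by omega) (by omega) (by omega) (by ring),
          d_posE (j+1) j (2*j+1) (2*j+2) 1 (j+1) (j*(2*j+1))
            (by omega) (by omega) (by omega) (by omega) (by omega) (by ring),
          d_out (show j+1 < (((j+2:ℕ)):ℤ).natAbs by rw [natAbs_posE]; omega),
          G_oneE (2*j+2) (2*j+2) (by omega),
          G_singleE (2*j+3) (2*j+4) (by omega),
          G_singleE (2*j+1) (2*j+2) (by omega),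
          G_rightE 1 (j+1) (j+2) (by omega) (by omega),
          G_leftE 0 1 (j+1) (by omega) (by omega)]
        ring
      · rcases Nat.eq_or_lt_of_le h with h' | h'
        · -- P5 : j + 1 = n + 1, n = j
          obtain rfl : n = j := by omega
          
          rw [d_posE (n+1) (n+1) (2*n+2) (2*n+2) 0 (n+1) ((n+1)*(2*n+3))
              (by omega) (by omega) (by omega) (by omega) (by omega) (by ring),
            d_posE n n (2*n) (2*n) 0 n (n*(2*n+1))
              (by omega) (by omega) (by omega) (by omega) (by omega) (by ring),
            d_out (show n < (((n+1:ℕ)):ℤ).natAbs by rw [natAbs_posE]; omega),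
            d_out (show n < (((n+2:ℕ)):ℤ).natAbs by rw [natAbs_posE]; omega),
            G_oneE (2*n+2) (2*n+2) (by omega),
            G_oneE (2*n) (2*n) (by omega),
            G_rightE 0 n (n+1) (by omega) (by omega)]
          ring
        · -- P6 : k ≥ n + 2
          obtain ⟨c, rfl⟩ : ∃ c, j = n + c + 1 := ⟨j - n - 1, by omega⟩
          rw [d_out (show n+1 < (((n+c+1+1:ℕ)):ℤ).natAbs by rw [natAbs_posE]; omega),
            d_out (show n < (((n+c+1+1:ℕ)):ℤ).natAbs by rw [natAbs_posE]; omega),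
            d_out (show n < (((n+c+1:ℕ)):ℤ).natAbs by rw [natAbs_posE]; omega),
            d_out (show n < (((n+c+1+2:ℕ)):ℤ).natAbs by rw [natAbs_posE]; omega)]
          ring
  · -- m < 0 : m = -(k+1)
    obtain ⟨k, rfl⟩ : ∃ k : ℕ, m = -((k : ℤ) + 1) := ⟨(-m - 1).toNat, by omega⟩
    rw [show (-((k : ℤ) + 1)) - 1 = -(((k+1 : ℕ) : ℤ) + 1) by push_cast; try ring]
    rcases Nat.lt_or_ge (k + 1) n with h | h
    · -- N1 : n ≥ k + 2
      rcases Nat.eq_zero_or_pos k with rfl | hk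
      · -- N1, k = 0 : n = c + 2
        obtain ⟨c, rfl⟩ : ∃ c, n = c + 2 := ⟨n - 2, by omega⟩
        rw [show (-(((0:ℕ) : ℤ) + 1)) + 1 = ((0 : ℕ) : ℤ) by push_cast; try ring,
          d_negE (c+2+1) 0 (c+4) (2*c+6) (c+2) (c+3) 1 (by omega) (by omega) (by omega)
            (by omega) (by omega) (by omega),
          d_negE (c+2) 0 (c+3) (2*c+4) (c+1) (c+2) 1 (by omega) (by omega) (by omega)
            (by omega) (by omega) (by omega),
          d_negE (c+2) 1 (c+4) (2*c+4) c (c+2) 6 (by omega) (by omega) (by omega)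
            (by omega) (by omega) (by omega),
          d_posE (c+2) 0 (c+2) (2*c+4) (c+2) (c+2) 0 (by omega) (by omega) (by omega)
            (by omega) (by omega) (by omega),
          G_rightE (c+4) (2*c+5) (2*c+6) (by omega) (by omega),
          G_rightE (c+4) (2*c+4) (2*c+5) (by omega) (by omega),
          G_singleE (c+2) (c+3) (by omega),
          G_oneE (c+2) (c+2) (by omega),
          G_leftE (c+2) (c+3) (2*c+4) (by omega) (by omega),
          G_leftE (c+3) (c+4) (2*c+4) (by omega) (by omega),
          G_leftE c (c+1) (c+2) (by omega) (by omega),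
          G_singleE (c+1) (c+2) (by omega)]
        ring
      · -- N1, k = j + 1 : n = j + c + 3
        obtain ⟨j, rfl⟩ : ∃ j, k = j + 1 := ⟨k - 1, by omega⟩
        obtain ⟨c, rfl⟩ : ∃ c, n = j + c + 3 := ⟨n - j - 3, by omega⟩
        rw [show (-(((j+1:ℕ) : ℤ) + 1)) + 1 = -(((j:ℕ) : ℤ) + 1) by push_cast; try ring,
          d_negE (j+c+3+1) (j+1) (2*j+c+6) (2*j+2*c+8) (c+2) (j+c+4) ((j+2)*(2*j+3))
            (by omega) (by omega) (by omega) (by omega) (by omega) (by ring),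
          d_negE (j+c+3) (j+1) (2*j+c+5) (2*j+2*c+6) (c+1) (j+c+3) ((j+2)*(2*j+3))
            (by omega) (by omega) (by omega) (by omega) (by omega) (by ring),
          d_negE (j+c+3) (j+2) (2*j+c+6) (2*j+2*c+6) c (j+c+3) ((j+3)*(2*j+5))
            (by omega) (by omega) (by omega) (by omega) (by omega) (by ring),
          d_negE (j+c+3) j (2*j+c+4) (2*j+2*c+6) (c+2) (j+c+3) ((j+1)*(2*j+1))
            (by omega) (by omega) (by omega) (by omega) (by omega) (by ring),
          G_rightE (2*j+c+6) (2*j+2*c+7) (2*j+2*c+8) (by omega) (by omega),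
          G_rightE (2*j+c+6) (2*j+2*c+6) (2*j+2*c+7) (by omega) (by omega),
          G_rightE (c+2) (j+c+3) (j+c+4) (by omega) (by omega),
          G_leftE (2*j+c+4) (2*j+c+5) (2*j+2*c+6) (by omega) (by omega),
          G_leftE (2*j+c+5) (2*j+c+6) (2*j+2*c+6) (by omega) (by omega),
          G_leftE c (c+1) (j+c+3) (by omega) (by omega),
          G_leftE (c+1) (c+2) (j+c+3) (by omega) (by omega)]
        ring
    · rcases Nat.eq_or_lt_of_le h with h' | h'
      · -- N2 : n = k + 1
        rcases Nat.eq_zero_or_pos k with rfl | hk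
        · -- N2, k = 0, n = 1
          obtain rfl : n = 1 := by omega
          rw [show (-(((0:ℕ) : ℤ) + 1)) + 1 = ((0 : ℕ) : ℤ) by push_cast; try ring,
            d_negE 2 0 3 4 1 2 1 (by omega) (by omega) (by omega) (by omega) (by omega) (by omega),
            d_negE 1 0 2 2 0 1 1 (by omega) (by omega) (by omega) (by omega) (by omega) (by omega),
            d_out (show 1 < (-(((0+1:ℕ):ℤ) + 1)).natAbs by rw [natAbs_negE]; omega),
            d_posE 1 0 1 2 1 1 0 (by omega) (by omega) (by omega) (by omega) (by omega) (by omega),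
            G_singleE 3 4 (by omega),
            G_singleE 1 2 (by omega),
            G_oneE 2 2 (by omega),
            G_singleE 0 1 (by omega),
            G_oneE 1 1 (by omega)]
          ring
        · -- N2, k = j + 1, n = j + 2
          obtain ⟨j, rfl⟩ : ∃ j, k = j + 1 := ⟨k - 1, by omega⟩
          obtain rfl : n = j + 2 := by omega
          rw [show (-(((j+1:ℕ) : ℤ) + 1)) + 1 = -(((j:ℕ) : ℤ) + 1) by push_cast; try ring,
            d_negE (j+2+1) (j+1) (2*j+5) (2*j+6) 1 (j+3) ((j+2)*(2*j+3))
              (by omega) (by omega) (by omega) (by omega) (by omega) (by ring),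
            d_negE (j+2) (j+1) (2*j+4) (2*j+4) 0 (j+2) ((j+2)*(2*j+3))
              (by omega) (by omega) (by omega) (by omega) (by omega) (by ring),
            d_out (show j+2 < (-(((j+1+1:ℕ):ℤ) + 1)).natAbs by rw [natAbs_negE]; omega),
            d_negE (j+2) j (2*j+3) (2*j+4) 1 (j+2) ((j+1)*(2*j+1))
              (by omega) (by omega) (by omega) (by omega) (by omega) (by ring),
            G_singleE (2*j+5) (2*j+6) (by omega),
            G_rightE 1 (j+2) (j+3) (by omega) (by omega),
            G_oneE (2*j+4) (2*j+4) (by omega),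
            G_leftE 0 1 (j+2) (by omega) (by omega),
            G_singleE (2*j+3) (2*j+4) (by omega)]
          ring
      · rcases Nat.eq_or_lt_of_le h' with h'' | h''
        · -- N3 : n = k
          rcases Nat.eq_zero_or_pos k with rfl | hk
          · -- N3, k = 0, n = 0
            obtain rfl : n = 0 := by omega
            rw [show (-(((0:ℕ) : ℤ) + 1)) + 1 = ((0 : ℕ) : ℤ) by push_cast; try ring,
              d_negE 1 0 2 2 0 1 1 (by omega) (by omega) (by omega) (by omega) (by omega)
                (by omega),
              d_out (show 0 < (-(((0:ℕ):ℤ) + 1)).natAbs by rw [natAbs_negE]; omega),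
              d_out (show 0 < (-(((0+1:ℕ):ℤ) + 1)).natAbs by rw [natAbs_negE]; omega),
              d_posE 0 0 0 0 0 0 0 (by omega) (by omega) (by omega) (by omega) (by omega)
                (by omega),
              G_oneE 2 2 (by omega),
              G_singleE 0 1 (by omega),
              G_oneE 0 0 (by omega)]
            ring
          · -- N3, k = j + 1, n = j + 1
            obtain ⟨j, rfl⟩ : ∃ j, k = j + 1 := ⟨k - 1, by omega⟩
            obtain rfl : n = j + 1 := by omega
            rw [show (-(((j+1:ℕ) : ℤ) + 1)) + 1 = -(((j:ℕ) : ℤ) + 1) by push_cast; try ring,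
              d_negE (j+1+1) (j+1) (2*j+4) (2*j+4) 0 (j+2) ((j+2)*(2*j+3))
                (by omega) (by omega) (by omega) (by omega) (by omega) (by ring),
              d_out (show j+1 < (-(((j+1:ℕ):ℤ) + 1)).natAbs by rw [natAbs_negE]; omega),
              d_out (show j+1 < (-(((j+1+1:ℕ):ℤ) + 1)).natAbs by rw [natAbs_negE]; omega),
              d_negE (j+1) j (2*j+2) (2*j+2) 0 (j+1) ((j+1)*(2*j+1))
                (by omega) (by omega) (by omega) (by omega) (by omega) (by ring),
              G_oneE (2*j+4) (2*j+4) (by omega),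
              G_oneE (2*j+2) (2*j+2) (by omega),
              G_rightE 0 (j+1) (j+2) (by omega) (by omega)]
            ring
        · -- N4 : k ≥ n + 1
          obtain ⟨c, rfl⟩ : ∃ c, k = n + 1 + c := ⟨k - n - 1, by omega⟩
          rw [show (-(((n+1+c:ℕ) : ℤ) + 1)) + 1 = -(((n+1+c:ℕ) : ℤ)) by push_cast; try ring,
            d_out (show n+1 < (-(((n+1+c:ℕ):ℤ) + 1)).natAbs by rw [natAbs_negE]; omega),
            d_out (show n < (-(((n+1+c:ℕ):ℤ) + 1)).natAbs by rw [natAbs_negE]; omega),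
            d_out (show n < (-(((n+1+c+1:ℕ):ℤ) + 1)).natAbs by rw [natAbs_negE]; omega),
            d_out (show n < (-(((n+1+c:ℕ):ℤ))).natAbs by
              rw [Int.natAbs_neg, natAbs_posE]; omega)]
          ring
  

lemma sum_ext (n : ℕ) (B : Finset ℤ) (hB : Finset.Icc (-(n:ℤ)) (n:ℤ) ⊆ B) :
    ∑ m ∈ B, PowerSeries.C (T m) * d n m
      = ∑ m ∈ Finset.Icc (-(n:ℤ)) (n:ℤ), PowerSeries.C (T m) * d n m := by
  refine (Finset.sum_subset hB ?_).symm
  intro m _ hm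
  rw [Finset.mem_Icc] at hm
  rw [d_out (by omega), mul_zero]

lemma hT_mul : (PowerSeries.C (T 1 : R)) * (PowerSeries.C (T (-1) : R)) = 1 := by
  rw [← map_mul, ← T_add]
  norm_num

lemma prod_eq (n : ℕ) :
    ∏ i ∈ Finset.range n,
      ((1 - XP ^ (4 * (i+1))) * (1 + PowerSeries.C (T 1) * XP ^ (4 * (i+1) - 1))
        * (1 + PowerSeries.C (T (-1)) * XP ^ (4 * (i+1) - 3)))
      = ∑ m ∈ Finset.Icc (-(n:ℤ)) (n:ℤ), PowerSeries.C (T m) * d n m := by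
  induction n with
  | zero =>
      rw [Finset.range_zero, Finset.prod_empty]
      rw [show (-(0:ℕ):ℤ) = ((0:ℕ):ℤ) by norm_num]
      rw [Finset.Icc_self, Finset.sum_singleton,
        d_posE 0 0 0 0 0 0 0 (by omega) (by omega) (by omega) (by omega) (by omega) (by omega),
        G_oneE 0 0 (by omega)]
      simp [T_zero]
  | succ n ih =>
      rw [Finset.prod_range_succ, ih,
        show 4 * (n+1) - 1 = 4*n+3 by omega,
        show 4 * (n+1) - 3 = 4*n+1 by omega, show 4 * (n+1) = 4*n+4 by omega]
      have h0 : ∑ m ∈ Finset.Icc (-((n+1:ℕ):ℤ)) ((n+1:ℕ):ℤ), PowerSeries.C (T m) * d n m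
          = ∑ m ∈ Finset.Icc (-(n:ℤ)) (n:ℤ), PowerSeries.C (T m) * d n m := by
        refine sum_ext n _ ?_
        intro x hx
        simp only [Finset.mem_Icc] at hx ⊢
        push_cast at hx ⊢
        omega
      have h1 : ∑ m ∈ Finset.Icc (-((n+1:ℕ):ℤ)) ((n+1:ℕ):ℤ),
            PowerSeries.C (T m) * d n (m-1)
          = PowerSeries.C (T 1) *
              ∑ m ∈ Finset.Icc (-(n:ℤ)) (n:ℤ), PowerSeries.C (T m) * d n m := by
        rw [show Finset.Icc (-((n+1:ℕ):ℤ)) ((n+1:ℕ):ℤ)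
            = Finset.map (addRightEmbedding 1)
                (Finset.Icc (-((n+1:ℕ):ℤ) - 1) (((n+1:ℕ):ℤ) - 1)) by
          rw [Finset.map_add_right_Icc]; congr 1 <;> ring, Finset.sum_map]
        have hc : ∀ m ∈ Finset.Icc (-((n+1:ℕ):ℤ) - 1) (((n+1:ℕ):ℤ) - 1),
            PowerSeries.C (T (addRightEmbedding 1 m)) * d n (addRightEmbedding 1 m - 1)
              = PowerSeries.C (T 1) * (PowerSeries.C (T m) * d n m) := by
          intro m _
          rw [addRightEmbedding_apply, show m + 1 - 1 = m by ring, T_add, map_mul]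
          ring
        rw [Finset.sum_congr rfl hc, ← Finset.mul_sum]
        congr 1
        refine sum_ext n _ ?_
        intro x hx
        simp only [Finset.mem_Icc] at hx ⊢
        push_cast at hx ⊢
        omega
      have h2 : ∑ m ∈ Finset.Icc (-((n+1:ℕ):ℤ)) ((n+1:ℕ):ℤ),
            PowerSeries.C (T m) * d n (m+1)
          = PowerSeries.C (T (-1)) *
              ∑ m ∈ Finset.Icc (-(n:ℤ)) (n:ℤ), PowerSeries.C (T m) * d n m := by
        rw [show Finset.Icc (-((n+1:ℕ):ℤ)) ((n+1:ℕ):ℤ)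
            = Finset.map (addRightEmbedding (-1))
                (Finset.Icc (-((n+1:ℕ):ℤ) + 1) (((n+1:ℕ):ℤ) + 1)) by
          rw [Finset.map_add_right_Icc]; congr 1 <;> ring, Finset.sum_map]
        have hc : ∀ m ∈ Finset.Icc (-((n+1:ℕ):ℤ) + 1) (((n+1:ℕ):ℤ) + 1),
            PowerSeries.C (T (addRightEmbedding (-1) m)) * d n (addRightEmbedding (-1) m + 1)
              = PowerSeries.C (T (-1)) * (PowerSeries.C (T m) * d n m) := by
          intro m _
          rw [addRightEmbedding_apply, show m + -1 + 1 = m by ring,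
            show m + -1 = m + (-1) by ring, T_add, map_mul]
          ring
        rw [Finset.sum_congr rfl hc, ← Finset.mul_sum]
        congr 1
        refine sum_ext n _ ?_
        intro x hx
        simp only [Finset.mem_Icc] at hx ⊢
        push_cast at hx ⊢
        omega
      have hsum : ∀ m ∈ Finset.Icc (-((n+1:ℕ):ℤ)) ((n+1:ℕ):ℤ),
          PowerSeries.C (T m) * d (n+1) m =
            ((1 - XP ^ (4*n+4)) * (1 + XP ^ (8*n+4))) * (PowerSeries.C (T m) * d n m)
              + ((1 - XP ^ (4*n+4)) * XP ^ (4*n+3)) * (PowerSeries.C (T m) * d n (m-1))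
              + ((1 - XP ^ (4*n+4)) * XP ^ (4*n+1)) * (PowerSeries.C (T m) * d n (m+1)) := by
        intro m _
        rw [key n m]; ring
      rw [Finset.sum_congr rfl hsum, Finset.sum_add_distrib, Finset.sum_add_distrib,
        ← Finset.mul_sum, ← Finset.mul_sum, ← Finset.mul_sum, h0, h1, h2]
      linear_combination ((∑ m ∈ Finset.Icc (-(n:ℤ)) (n:ℤ), PowerSeries.C (T m) * d n m)
        * (1 - XP ^ (4*n+4)) * XP ^ (4*n+3) * XP ^ (4*n+1)) * hT_mul


lemma trunc_eq_of_dvd {N : ℕ} {a b : PowerSeries R} (h : XP ^ N ∣ a - b) :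
    PowerSeries.trunc N a = PowerSeries.trunc N b := by
  refine Polynomial.ext fun k => ?_
  rw [PowerSeries.coeff_trunc, PowerSeries.coeff_trunc]
  split
  · have h2 := PowerSeries.X_pow_dvd_iff.mp h k (by assumption)
    rw [map_sub, sub_eq_zero] at h2
    exact h2
  · rfl

lemma prod_sub_one_dvd {y : PowerSeries R} (s : Finset ℕ) (f : ℕ → PowerSeries R) :
    (∀ i ∈ s, y ∣ (f i - 1)) → y ∣ (∏ i ∈ s, f i) - 1 := by
  classical
  induction s using Finset.induction_on with
  | empty => intro _; simp
  | @insert a s ha ih =>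
      intro h
      rw [Finset.prod_insert ha]
      have h1 : y ∣ f a - 1 := h a (Finset.mem_insert_self a s)
      have h2 : y ∣ (∏ i ∈ s, f i) - 1 := ih (fun i hi => h i (Finset.mem_insert_of_mem hi))
      have hr : f a * ∏ i ∈ s, f i - 1 = f a * ((∏ i ∈ s, f i) - 1) + (f a - 1) := by ring
      rw [hr]
      exact dvd_add (Dvd.dvd.mul_left h2 _) h1

lemma G_sub_one_dvd (a b : ℕ) : XP ^ (4*a+4) ∣ G a b - 1 := by
  refine prod_sub_one_dvd _ _ ?_
  intro i hi
  rw [Finset.mem_Ioc] at hi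
  have h : XP ^ (4*a+4) ∣ XP ^ (4*i) := pow_dvd_pow _ (by omega)
  rw [show (1 : PowerSeries R) - XP^(4*i) - 1 = -(XP^(4*i)) by ring]
  exact h.neg_right

lemma d_close (N n : ℕ) (m : ℤ) (h1 : m.natAbs ≤ n) (h2 : N ≤ 4*(n - m.natAbs)+4) :
    XP ^ N ∣ d n m - XP ^ (m*(2*m+1)).toNat := by
  rw [d, if_pos h1]
  have hA := G_sub_one_dvd (n + m.natAbs) (2*n)
  have hB := G_sub_one_dvd (n - m.natAbs) n
  have hr : XP ^ (m*(2*m+1)).toNat * (G (n+m.natAbs) (2*n) * G (n-m.natAbs) n)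
        - XP ^ (m*(2*m+1)).toNat
      = XP ^ (m*(2*m+1)).toNat * (G (n+m.natAbs) (2*n) * (G (n-m.natAbs) n - 1)
        + (G (n+m.natAbs) (2*n) - 1)) := by ring
  rw [hr]
  have hN : XP ^ N ∣ XP ^ (4*(n - m.natAbs)+4) := pow_dvd_pow _ h2
  have h3 : XP ^ N ∣ G (n-m.natAbs) n - 1 := hN.trans hB
  have h4 : XP ^ N ∣ G (n+m.natAbs) (2*n) - 1 :=
    (hN.trans (pow_dvd_pow _ (by omega))).trans hA
  exact Dvd.dvd.mul_left (dvd_add (h3.mul_left _) h4) _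

lemma exp_ge (m : ℤ) : m.natAbs ≤ (m * (2*m+1)).toNat := by
  rcases le_or_gt 0 m with h | h
  · obtain ⟨k, rfl⟩ := Int.eq_ofNat_of_zero_le h
    rw [natAbs_posE, toNat_pos_exp]
    calc k = k * 1 := (mul_one k).symm
    _ ≤ k * (2*k+1) := Nat.mul_le_mul_left k (by omega)
  · obtain ⟨k, rfl⟩ : ∃ k : ℕ, m = -((k:ℤ)+1) := ⟨(-m-1).toNat, by omega⟩
    rw [natAbs_negE, toNat_neg_exp]
    calc k+1 = (k+1) * 1 := (mul_one _).symm
    _ ≤ (k+1) * (2*k+1) := Nat.mul_le_mul_left (k+1) (by omega)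

lemma X_dvd_d (N n : ℕ) (m : ℤ) (h : N ≤ (m*(2*m+1)).toNat) : XP ^ N ∣ d n m := by
  rw [d]
  split
  · exact Dvd.dvd.mul_right (pow_dvd_pow _ h) _
  · exact dvd_zero _

end

end JTP

/-- `P` is the limit of the partial products of `f` in the formal power series topology. -/
def PSHasProd {R : Type*} [CommRing R] (f : ℕ → PowerSeries R) (P : PowerSeries R) : Prop :=
  ∀ N : ℕ, ∃ M : ℕ, ∀ m ≥ M,
    PowerSeries.trunc N (∏ i ∈ Finset.range m, f i) = PowerSeries.trunc N P

/-- `S` is the limit over finite subsets of `ℤ` of the partial sums of `g` in the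
formal power series topology. -/
def PSHasSumZ {R : Type*} [CommRing R] (g : ℤ → PowerSeries R) (S : PowerSeries R) : Prop :=
  ∀ N : ℕ, ∃ A : Finset ℤ, ∀ B : Finset ℤ, A ⊆ B →
    PowerSeries.trunc N (∑ n ∈ B, g n) = PowerSeries.trunc N S

/-- The Jacobi-type triple product identity
`∏_{i≥1} (1 - q^{2i})(1 + z q^{2i-1/2})(1 + z⁻¹ q^{2i-3/2}) = ∑_{m ∈ ℤ} z^m q^{m(2m+1)/2}`,
written as formal power series in `t = q^{1/2}` (so `q^{a/2} = t^a`) with coefficients in the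
Laurent polynomial ring `ℤ[z, z⁻¹]`; here `T m` denotes `z^m`. -/
theorem jacobi_triple_product (P S : PowerSeries (LaurentPolynomial ℤ))
    (hP : PSHasProd (fun i =>
      (1 - (PowerSeries.X : PowerSeries (LaurentPolynomial ℤ)) ^ (4 * (i + 1)))
        * (1 + PowerSeries.C (T 1) * PowerSeries.X ^ (4 * (i + 1) - 1))
        * (1 + PowerSeries.C (T (-1)) * PowerSeries.X ^ (4 * (i + 1) - 3))) P)
    (hS : PSHasSumZ (fun m =>
      PowerSeries.C (T m) * PowerSeries.X ^ (m * (2 * m + 1)).toNat) S) :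
    P = S := by
  have main : ∀ N : ℕ, PowerSeries.trunc N P = PowerSeries.trunc N S := by
    intro N
    obtain ⟨M, hM⟩ := hP N
    obtain ⟨A, hA⟩ := hS N
    set n : ℕ := M + 2*N + 2 with hn
    have hPn := hM n (by omega)
    have hSn := hA (A ∪ Finset.Icc (-(n:ℤ)) (n:ℤ)) Finset.subset_union_left
    rw [JTP.prod_eq n] at hPn
    have step1 : PowerSeries.trunc N
          (∑ m ∈ Finset.Icc (-(n:ℤ)) (n:ℤ), PowerSeries.C (T m) * JTP.d n m)
        = PowerSeries.trunc N (∑ m ∈ Finset.Icc (-(n:ℤ)) (n:ℤ),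
            PowerSeries.C (T m) * PowerSeries.X ^ (m * (2 * m + 1)).toNat) := by
      refine JTP.trunc_eq_of_dvd ?_
      rw [← Finset.sum_sub_distrib]
      refine Finset.dvd_sum ?_
      intro m hm
      rw [Finset.mem_Icc] at hm
      have hna : m.natAbs ≤ n := by omega
      rcases le_or_gt N (4*(n - m.natAbs)+4) with hc | hc
      · rw [← mul_sub]
        exact Dvd.dvd.mul_left (JTP.d_close N n m hna hc) _
      · have hbig : N ≤ m.natAbs := by omega
        have he : N ≤ (m * (2*m+1)).toNat := hbig.trans (JTP.exp_ge m)
        refine dvd_sub ?_ ?_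
        · exact Dvd.dvd.mul_left (JTP.X_dvd_d N n m he) _
        · exact Dvd.dvd.mul_left (pow_dvd_pow _ he) _
    have step2 : PowerSeries.trunc N
          (∑ m ∈ A ∪ Finset.Icc (-(n:ℤ)) (n:ℤ),
            PowerSeries.C (T m : LaurentPolynomial ℤ) * PowerSeries.X ^ (m * (2 * m + 1)).toNat)
        = PowerSeries.trunc N (∑ m ∈ Finset.Icc (-(n:ℤ)) (n:ℤ),
            PowerSeries.C (T m) * PowerSeries.X ^ (m * (2 * m + 1)).toNat) := by
      refine JTP.trunc_eq_of_dvd ?_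
      rw [← Finset.sum_sdiff (Finset.subset_union_right), add_sub_cancel_right]
      refine Finset.dvd_sum ?_
      intro m hm
      rw [Finset.mem_sdiff, Finset.mem_Icc] at hm
      have hbig : N ≤ m.natAbs := by omega
      have he : N ≤ (m * (2*m+1)).toNat := hbig.trans (JTP.exp_ge m)
      exact Dvd.dvd.mul_left (pow_dvd_pow _ he) _
    calc PowerSeries.trunc N P
        = PowerSeries.trunc N
            (∑ m ∈ Finset.Icc (-(n:ℤ)) (n:ℤ), PowerSeries.C (T m) * JTP.d n m) := hPn.symm
      _ = PowerSeries.trunc N (∑ m ∈ Finset.Icc (-(n:ℤ)) (n:ℤ),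
            PowerSeries.C (T m) * PowerSeries.X ^ (m * (2 * m + 1)).toNat) := step1
      _ = PowerSeries.trunc N (∑ m ∈ A ∪ Finset.Icc (-(n:ℤ)) (n:ℤ),
            PowerSeries.C (T m) * PowerSeries.X ^ (m * (2 * m + 1)).toNat) := step2.symm
      _ = PowerSeries.trunc N S := hSn
  refine PowerSeries.ext fun k => ?_
  have h := congrArg (fun p => Polynomial.coeff p k) (main (k+1))
  simpa [PowerSeries.coeff_trunc, Nat.lt_succ_self] using h
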